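/- Let g : ℕ → ℕ be the function defined by g(k) = 1 for k ≤ 4 and g(k) = 2^m for 4^m < k ≤ 4^{m+1} (m > 1), and let f(x) = log(1+x). Then the sequence {k/g(k)}_{k∈ℕ} is unbounded, yet the sequence {f(k)/f(g(k))}_{k∈ℕ} is bounded (so that, by the criterion for the associated submeasures, sup_{m∈ℕ} φ_m(ℕ) < ∞). -/

import Mathlib

open Filter Topology

/-- `cnt C k` is the number of elements of `C` in `[0, k-1]`. -/
noncomputable def cnt (C : Set ℕ) (k : ℕ) : ℕ := (C ∩ Set.Iio k).ncard

/-- A modulus function `f : [0,∞) → [0,∞)`: nonnegative, increasing, subadditive,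
vanishing exactly at `0`, and right continuous at `0`. -/
def IsModulus (f : ℝ → ℝ) : Prop :=
  (∀ x, 0 ≤ x → 0 ≤ f x) ∧ MonotoneOn f (Set.Ici 0) ∧
  (∀ x y, 0 ≤ x → 0 ≤ y → f (x + y) ≤ f x + f y) ∧
  (∀ x, 0 ≤ x → (f x = 0 ↔ x = 0)) ∧ ContinuousWithinAt f (Set.Ici 0) 0

/-- `f` is unbounded on `[0,∞)`. -/
def IsUnboundedMod (f : ℝ → ℝ) : Prop := ∀ M : ℝ, ∃ x : ℝ, 0 ≤ x ∧ M < f x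

/-- `H↑`: nondecreasing `ℕ`-valued weight functions, i.e. monotone `g : ℕ → ℕ`
with `g(k) → ∞` and `k / g(k)` not converging to `0`. -/
def InHup (g : ℕ → ℕ) : Prop :=
  Monotone g ∧ Tendsto g atTop atTop ∧
  ¬ Tendsto (fun k : ℕ => (k : ℝ) / (g k : ℝ)) atTop (nhds 0)

/-- The modular simple density ideal `Z_g(f)` for a `ℕ`-valued weight function. -/
def ZgfN (f : ℝ → ℝ) (g : ℕ → ℕ) : Set (Set ℕ) :=
  {C | Tendsto (fun k => f (cnt C k) / f (g k : ℝ)) atTop (nhds 0)}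

/-- The submeasure `φ_m` associated with `f`, `g` and the scale sequence `kk`:
`φ_m(C) = f(|C ∩ [k_m, k_{m+1})|) / f(g(k_m))`. -/
noncomputable def phi (f : ℝ → ℝ) (g : ℕ → ℕ) (kk : ℕ → ℕ) (m : ℕ) (C : Set ℕ) : ℝ :=
  f (((C ∩ Set.Ico (kk m) (kk (m + 1))).ncard : ℝ)) / f (g (kk m) : ℝ)

/-- The weight function with `g(k) = 1` for `k ≤ 4` and `g(k) = 2^m` for
`4^m < k ≤ 4^(m+1)`. -/
noncomputable def gEx (k : ℕ) : ℕ := if k ≤ 4 then 1 else 2 ^ Nat.log 4 (k - 1)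

/-- The modulus function `f(x) = log(1+x)`. -/
noncomputable def fLog (x : ℝ) : ℝ := Real.log (1 + x)



lemma gEx_one_le (k : ℕ) : 1 ≤ gEx k := by
  unfold gEx; split
  · exact le_refl 1
  · exact Nat.one_le_two_pow

lemma fLog_mono {x y : ℝ} (hx : 0 ≤ x) (h : x ≤ y) : fLog x ≤ fLog y :=
  Real.log_le_log (by linarith) (by linarith)

lemma log2_le_fLog_gEx (k : ℕ) : Real.log 2 ≤ fLog ((gEx k : ℕ) : ℝ) := by
  have h : (1:ℝ) ≤ (gEx k : ℝ) := by exact_mod_cast gEx_one_le k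
  unfold fLog
  exact Real.log_le_log (by norm_num) (by linarith)

lemma gEx_of_gt {k : ℕ} (h : 4 < k) : gEx k = 2 ^ Nat.log 4 (k-1) := if_neg (by omega)

lemma gEx_four_pow {j : ℕ} (hj : 1 ≤ j) : gEx (4^(j+1)) = 2^j := by
  have h1 : (4:ℕ)^j < 4^(j+1) := Nat.pow_lt_pow_right (by norm_num) (lt_add_one j)
  have h2 : (4:ℕ)^1 ≤ 4^j := Nat.pow_le_pow_right (by norm_num) hj
  have h4 : 4 < 4^(j+1) := by simpa using lt_of_le_of_lt (by simpa using h2) h1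
  rw [gEx_of_gt h4]
  congr 1
  exact Nat.log_eq_of_pow_le_of_lt_pow (by omega) (by omega)

lemma fLog_two_pow (m : ℕ) : (m:ℝ) * Real.log 2 ≤ fLog (((2:ℕ)^m : ℕ) : ℝ) := by
  have hc : (((2:ℕ)^m : ℕ) : ℝ) = (2:ℝ)^m := by push_cast; ring
  unfold fLog
  rw [hc]
  have h0 : (0:ℝ) < 2^m := by positivity
  have h1 : (m:ℝ) * Real.log 2 = Real.log ((2:ℝ)^m) := by rw [Real.log_pow]
  rw [h1]
  exact Real.log_le_log h0 (by linarith)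

lemma keyA (k : ℕ) : fLog (k : ℝ) ≤ 5 * fLog ((gEx k : ℕ) : ℝ) := by
  have hlog2 : (0:ℝ) < Real.log 2 := Real.log_pos (by norm_num)
  by_cases h : k ≤ 4
  · have h1 : gEx k = 1 := if_pos h
    rw [h1]
    have hk5 : fLog (k:ℝ) ≤ Real.log 5 := by
      unfold fLog
      exact Real.log_le_log (by positivity) (by exact_mod_cast Nat.add_le_add_left h 1)
    have h32 : (5:ℝ) * fLog ((1:ℕ):ℝ) = Real.log 32 := by
      unfold fLog
      norm_num
      rw [show (32:ℝ) = 2^(5:ℕ) by norm_num, Real.log_pow]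
      push_cast; ring
    rw [h32]
    exact hk5.trans (Real.log_le_log (by norm_num) (by norm_num))
  · push_neg at h
    set m := Nat.log 4 (k-1) with hmdef
    have hm1 : 1 ≤ m := by
      have : (4:ℕ)^1 ≤ k - 1 := by omega
      exact (Nat.le_log_iff_pow_le (by norm_num) (by omega)).mpr this
    have hk : k ≤ 4^(m+1) := by
      have h5 := Nat.lt_pow_succ_log_self (show 1 < 4 by norm_num) (k-1)
      rw [← hmdef] at h5
      omega
    have hgEx : gEx k = 2^m := gEx_of_gt h
    have h41 : (1:ℝ) ≤ (4:ℝ)^(m+1) := one_le_pow₀ (by norm_num)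
    have hcast : (1:ℝ) + k ≤ 2 * (4:ℝ)^(m+1) := by
      have : (k:ℝ) ≤ (4:ℝ)^(m+1) := by exact_mod_cast hk
      linarith
    have hmR : (1:ℝ) ≤ (m:ℝ) := by exact_mod_cast hm1
    calc fLog (k:ℝ) ≤ Real.log (2 * (4:ℝ)^(m+1)) :=
          Real.log_le_log (by positivity) hcast
      _ = Real.log 2 + ((m:ℝ)+1) * Real.log 4 := by
          rw [Real.log_mul (by norm_num) (by positivity), Real.log_pow]
          push_cast; ring
      _ = (2*(m:ℝ) + 3) * Real.log 2 := by
          rw [show (4:ℝ) = 2^(2:ℕ) by norm_num, Real.log_pow]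
          push_cast; ring
      _ ≤ 5 * ((m:ℝ) * Real.log 2) := by nlinarith
      _ ≤ 5 * fLog ((gEx k : ℕ) : ℝ) := by
          rw [hgEx]
          have := fLog_two_pow m
          linarith

theorem stmt15 (kk : ℕ → ℕ) (hkk0 : kk 0 = 0)
    (hkk : ∀ m : ℕ, 1 ≤ m → kk m = sInf {k : ℕ | (2 : ℝ) ^ m ≤ fLog (gEx k : ℝ)}) :
    (¬ ∃ M : ℝ, ∀ k : ℕ, (k : ℝ) / (gEx k : ℝ) ≤ M) ∧
    (∃ M : ℝ, ∀ k : ℕ, fLog (k : ℝ) / fLog (gEx k : ℝ) ≤ M) ∧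
    (∃ M : ℝ, ∀ m : ℕ, phi fLog gEx kk m Set.univ ≤ M) := by
  have hlog2pos : (0:ℝ) < Real.log 2 := Real.log_pos (by norm_num)
  have hlog2le1 : Real.log 2 ≤ 1 := by
    have := Real.log_le_sub_one_of_pos (show (0:ℝ) < 2 by norm_num)
    linarith
  refine ⟨?_, ?_, ?_⟩
  · rintro ⟨M, hM⟩
    obtain ⟨n, hn⟩ := pow_unbounded_of_one_lt M (show (1:ℝ) < 2 by norm_num)
    have hg : gEx (4^(n+2)) = 2^(n+1) := gEx_four_pow (by omega)
    have hle := hM (4^(n+2))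
    rw [hg] at hle
    have hEq : ((4^(n+2) : ℕ):ℝ) / (((2:ℕ)^(n+1) : ℕ):ℝ) = 2^(n+3) := by
      push_cast
      rw [show (4:ℝ) = 2^(2:ℕ) by norm_num, ← pow_mul, div_eq_iff (by positivity), ← pow_add]
      congr 1; ring
    rw [hEq] at hle
    have : (2:ℝ)^n ≤ 2^(n+3) := pow_le_pow_right₀ (by norm_num) (by omega)
    linarith
  · refine ⟨5, fun k => ?_⟩
    have hD : 0 < fLog ((gEx k : ℕ):ℝ) :=
      lt_of_lt_of_le hlog2pos (log2_le_fLog_gEx k)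
    rw [div_le_iff₀ hD]
    exact keyA k
  · have hSne : ∀ m : ℕ, {k : ℕ | (2:ℝ)^m ≤ fLog (gEx k : ℝ)}.Nonempty := by
      intro m
      set j := ⌈(2:ℝ)^m / Real.log 2⌉₊ + 1 with hj
      refine ⟨4^(j+1), ?_⟩
      have hg : gEx (4^(j+1)) = 2^j := gEx_four_pow (by omega)
      show (2:ℝ)^m ≤ fLog ((gEx (4^(j+1)) : ℕ) : ℝ)
      rw [hg]
      have h1 : (2:ℝ)^m / Real.log 2 ≤ (j:ℝ) := by
        have h2 := Nat.le_ceil ((2:ℝ)^m / Real.log 2)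
        have h3 : ((⌈(2:ℝ)^m / Real.log 2⌉₊ : ℕ) : ℝ) ≤ (j:ℝ) := by
          have h4 : ⌈(2:ℝ)^m / Real.log 2⌉₊ ≤ j := by omega
          exact_mod_cast h4
        linarith
      calc (2:ℝ)^m = ((2:ℝ)^m / Real.log 2) * Real.log 2 := by field_simp
        _ ≤ (j:ℝ) * Real.log 2 := mul_le_mul_of_nonneg_right h1 hlog2pos.le
        _ ≤ fLog (((2:ℕ)^j : ℕ):ℝ) := fLog_two_pow j
    have hmem : ∀ m : ℕ, 1 ≤ m → (2:ℝ)^m ≤ fLog (gEx (kk m) : ℝ) := by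
      intro m hm
      have h := Nat.sInf_mem (hSne m)
      rw [← hkk m hm] at h
      exact h
    have hpos1 : ∀ m : ℕ, 1 ≤ m → 1 ≤ kk m := by
      intro m hm
      by_contra hc
      push_neg at hc
      have h0 : kk m = 0 := by omega
      have h := hmem m hm
      rw [h0] at h
      have hg0 : gEx 0 = 1 := if_pos (by norm_num)
      rw [hg0] at h
      have hf1 : fLog ((1:ℕ):ℝ) = Real.log 2 := by unfold fLog; norm_num
      rw [hf1] at h
      have h2m : (2:ℝ) ≤ 2^m := by
        calc (2:ℝ) = 2^1 := (pow_one 2).symm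
          _ ≤ 2^m := pow_le_pow_right₀ (by norm_num) hm
      linarith
    have hub : ∀ m : ℕ, 1 ≤ m → fLog ((gEx (kk m - 1) : ℕ) : ℝ) < 2^m := by
      intro m hm
      have h1 := hpos1 m hm
      have hlt : kk m - 1 < sInf {k : ℕ | (2:ℝ)^m ≤ fLog (gEx k : ℝ)} := by
        rw [← hkk m hm]; omega
      have h2 := Nat.notMem_of_lt_sInf hlt
      simpa [Set.mem_setOf_eq, not_le] using h2
    refine ⟨max (phi fLog gEx kk 0 Set.univ) 11, fun m => ?_⟩
    rcases Nat.eq_zero_or_pos m with h0 | hm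
    · rw [h0]; exact le_max_left _ _
    · refine le_trans ?_ (le_max_right _ _)
      have hD : (2:ℝ)^m ≤ fLog ((gEx (kk m) : ℕ) : ℝ) := hmem m hm
      have h2mpos : (0:ℝ) < 2^m := by positivity
      have hDpos : 0 < fLog ((gEx (kk m) : ℕ) : ℝ) := lt_of_lt_of_le h2mpos hD
      have hb1 : 1 ≤ kk (m+1) := hpos1 (m+1) (by omega)
      have hub' : fLog ((gEx (kk (m+1) - 1) : ℕ) : ℝ) < 2^(m+1) := hub (m+1) (by omega)
      unfold phi
      rw [Set.univ_inter, Set.ncard_eq_toFinset_card', Set.toFinset_Ico, Nat.card_Ico]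
      rw [div_le_iff₀ hDpos]
      have hN1 : fLog ((kk (m+1) - kk m : ℕ):ℝ) ≤ fLog ((kk (m+1) :ℕ):ℝ) :=
        fLog_mono (Nat.cast_nonneg _) (Nat.cast_le.mpr (Nat.sub_le _ _))
      have hb1R : (1:ℝ) ≤ ((kk (m+1):ℕ):ℝ) := by exact_mod_cast hb1
      have hsplit : fLog ((kk (m+1):ℕ):ℝ) ≤ Real.log 2 + fLog (((kk (m+1) - 1:ℕ)):ℝ) := by
        have hcast : ((kk (m+1) - 1:ℕ):ℝ) = ((kk (m+1):ℕ):ℝ) - 1 := by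
          push_cast [Nat.cast_sub hb1]; ring
        unfold fLog
        rw [hcast, show (1:ℝ) + (((kk (m+1):ℕ):ℝ) - 1) = ((kk (m+1):ℕ):ℝ) by ring]
        calc Real.log (1 + ((kk (m+1):ℕ):ℝ)) ≤ Real.log (2 * ((kk (m+1):ℕ):ℝ)) :=
              Real.log_le_log (by linarith) (by linarith)
          _ = Real.log 2 + Real.log ((kk (m+1):ℕ):ℝ) :=
              Real.log_mul (by norm_num) (by linarith)
      have hk2 : fLog ((kk (m+1) - 1:ℕ):ℝ) ≤ 5 * fLog ((gEx (kk (m+1) - 1) : ℕ):ℝ) :=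
        keyA (kk (m+1) - 1)
      have h2m1 : (2:ℝ)^(m+1) = 2 * 2^m := by ring
      have hl2D : Real.log 2 ≤ fLog ((gEx (kk m) : ℕ) : ℝ) := log2_le_fLog_gEx (kk m)
      linarith
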